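/- Let X ⊆ ℝ^k and let f : X → ℝ^d be a (K,M)-quasi-isometric embedding for some K ≥ 1 and M ≥ 0. For every α ≥ 0 there exists a constant c ≥ 1, depending only on α and f, such that for all subsets A ⊆ X, one has M^α(A) ≤ c·M^α(f(A)) and M^α(f(A)) ≤ c·M^α(A). In particular, A is α-mass regular if and only if f(A) is α-mass regular, and mdim(A) = mdim(f(A)). -/

import Mathlib

open Set MeasureTheory Filter
open scoped ENNReal NNReal

noncomputable section

variable {ι : Type*} [Fintype ι]

/-- A (half-open) cube in `ℝ^ι` based at `a` with side length `s`. -/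
def cube (a : EuclideanSpace ℝ ι) (s : ℝ) : Set (EuclideanSpace ℝ ι) :=
  {x | ∀ i, a i ≤ x i ∧ x i < a i + s}

/-- Coordinatewise floor map. -/
def floorPt (x : EuclideanSpace ℝ ι) : EuclideanSpace ℝ ι := WithLp.toLp 2 (fun i => (⌊x i⌋ : ℝ))

/-- `⌊A⌋`, the image of `A` under the coordinatewise floor map. -/
def floorSet (A : Set (EuclideanSpace ℝ ι)) : Set (EuclideanSpace ℝ ι) := floorPt '' A

/-- The α-counting measure of `A`. -/
def countMeas (α : ℝ) (A : Set (EuclideanSpace ℝ ι)) : ℝ≥0∞ :=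
  ⨅ ℓ : ℝ, ⨆ (a : EuclideanSpace ℝ ι) (s : ℝ) (_ : ℓ ≤ s ∧ 0 < s),
    ((floorSet A ∩ cube a s).encard : ℝ≥0∞) / ENNReal.ofReal (s ^ α)

/-- The counting dimension of `A`. -/
def cdim (A : Set (EuclideanSpace ℝ ι)) : ℝ :=
  sInf {α : ℝ | 0 ≤ α ∧ countMeas α A = 0}

/-- The centered cube `[-ℓ, ℓ)^ι`. -/
def centeredCube (ℓ : ℝ) : Set (EuclideanSpace ℝ ι) :=
  cube (WithLp.toLp 2 (fun _ => -ℓ) : EuclideanSpace ℝ ι) (2 * ℓ)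

/-- The α-mass measure of `A`. -/
def massMeas (α : ℝ) (A : Set (EuclideanSpace ℝ ι)) : ℝ≥0∞ :=
  ⨅ L : ℝ, ⨆ (ℓ : ℝ) (_ : L ≤ ℓ ∧ 0 < ℓ),
    ((floorSet A ∩ centeredCube ℓ).encard : ℝ≥0∞) / ENNReal.ofReal ((2 * ℓ) ^ α)

/-- The (upper) mass dimension of `A`. -/
def mdim (A : Set (EuclideanSpace ℝ ι)) : ℝ :=
  sInf {α : ℝ | 0 ≤ α ∧ massMeas α A = 0}


/-- `f` is a `(K,M)`-quasi-isometric embedding of `X` (with the Euclidean metrics). -/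
def QIEOn {ι κ : Type*} [Fintype ι] [Fintype κ] (K M : ℝ) (X : Set (EuclideanSpace ℝ ι))
    (f : EuclideanSpace ℝ ι → EuclideanSpace ℝ κ) : Prop :=
  ∀ x₁ ∈ X, ∀ x₂ ∈ X,
    (1 / K) * dist x₁ x₂ - M ≤ dist (f x₁) (f x₂) ∧ dist (f x₁) (f x₂) ≤ K * dist x₁ x₂ + M

/-! ### Auxiliary lemmas -/

lemma abs_coord_le_dist (x y : EuclideanSpace ℝ ι) (i : ι) : |x i - y i| ≤ dist x y := by
  rw [EuclideanSpace.dist_eq, ← Real.sqrt_sq_eq_abs]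
  apply Real.sqrt_le_sqrt
  have h : (x i - y i) ^ 2 = dist (x i) (y i) ^ 2 := by
    rw [Real.dist_eq, sq_abs]
  rw [h]
  exact Finset.single_le_sum (f := fun j => dist (x j) (y j) ^ 2)
    (fun j _ => sq_nonneg _) (Finset.mem_univ i)

lemma dist_le_of_coords (x y : EuclideanSpace ℝ ι) (B : ℝ) (hB : 0 ≤ B)
    (h : ∀ i, |x i - y i| ≤ B) : dist x y ≤ Real.sqrt (Fintype.card ι) * B := by
  rw [EuclideanSpace.dist_eq]
  have h1 : ∑ i, dist (x i) (y i) ^ 2 ≤ (Fintype.card ι : ℝ) * B ^ 2 := by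
    calc ∑ i, dist (x i) (y i) ^ 2 ≤ ∑ _i : ι, B ^ 2 :=
          Finset.sum_le_sum (fun i _ => by
            rw [Real.dist_eq]
            exact pow_le_pow_left₀ (abs_nonneg _) (h i) 2)
      _ = (Fintype.card ι : ℝ) * B ^ 2 := by
          simp [Finset.sum_const, nsmul_eq_mul]
  calc Real.sqrt (∑ i, dist (x i) (y i) ^ 2) ≤ Real.sqrt ((Fintype.card ι : ℝ) * B ^ 2) :=
        Real.sqrt_le_sqrt h1
    _ = Real.sqrt (Fintype.card ι) * B := by
        rw [Real.sqrt_mul (Nat.cast_nonneg _), Real.sqrt_sq hB]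

lemma abs_coord_le_norm (x : EuclideanSpace ℝ ι) (i : ι) : |x i| ≤ ‖x‖ := by
  have h := abs_coord_le_dist x 0 i
  rw [show (0 : EuclideanSpace ℝ ι) i = 0 from rfl, sub_zero, dist_zero_right] at h
  exact h

lemma mem_centeredCube {x : EuclideanSpace ℝ ι} {ℓ : ℝ} :
    x ∈ centeredCube ℓ ↔ ∀ i, -ℓ ≤ x i ∧ x i < ℓ := by
  simp only [centeredCube, cube, Set.mem_setOf_eq, PiLp.toLp_apply]
  refine forall_congr' (fun i => ?_)
  constructor <;> rintro ⟨a, b⟩ <;> exact ⟨by linarith, by linarith⟩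

lemma floorSet_int {S : Set (EuclideanSpace ℝ ι)} {w : EuclideanSpace ℝ ι}
    (hw : w ∈ floorSet S) (i : ι) : w i = ((⌊w i⌋ : ℤ) : ℝ) := by
  obtain ⟨y, -, rfl⟩ := hw
  show ((⌊y i⌋ : ℤ) : ℝ) = ((⌊((⌊y i⌋ : ℤ) : ℝ)⌋ : ℤ) : ℝ)
  rw [Int.floor_intCast]

lemma abs_sub_le_one_of_floorPt_eq {x x' : EuclideanSpace ℝ ι} (h : floorPt x = floorPt x')
    (i : ι) : |x i - x' i| ≤ 1 := by
  have h1 : ((⌊x i⌋ : ℤ) : ℝ) = ((⌊x' i⌋ : ℤ) : ℝ) := congrArg (fun v => v i) h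
  have h2 := Int.floor_le (x i)
  have h3 := Int.floor_le (x' i)
  have h4 := Int.lt_floor_add_one (x i)
  have h5 := Int.lt_floor_add_one (x' i)
  rw [abs_le]
  exact ⟨by linarith, by linarith⟩

lemma abs_floorPt_sub_le_one (y : EuclideanSpace ℝ ι) (i : ι) : |floorPt y i - y i| ≤ 1 := by
  have h2 := Int.floor_le (y i)
  have h4 := Int.lt_floor_add_one (y i)
  rw [show floorPt y i = ((⌊y i⌋ : ℤ) : ℝ) from rfl, abs_le]
  exact ⟨by linarith, by linarith⟩

lemma encard_le_mul_of_fibers {α β : Type*} {s : Set α} {t : Set β} (g : α → β) (m : ℕ)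
    (hm : 1 ≤ m) (hmaps : ∀ a ∈ s, g a ∈ t)
    (hfib : ∀ b : β, (s ∩ g ⁻¹' {b}).encard ≤ (m : ℕ∞)) :
    s.encard ≤ (m : ℕ∞) * t.encard := by
  classical
  by_cases ht : t.Finite
  · have hfibfin : ∀ b : β, (s ∩ g ⁻¹' {b}).Finite := fun b =>
      Set.finite_of_encard_le_coe (hfib b)
    have hs : s.Finite := by
      have hsub : s ⊆ ⋃ b ∈ t, s ∩ g ⁻¹' {b} := fun a ha =>
        Set.mem_biUnion (hmaps a ha) ⟨ha, rfl⟩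
      exact ((ht.biUnion (fun b _ => hfibfin b)).subset hsub)
    rw [hs.encard_eq_coe_toFinset_card, ht.encard_eq_coe_toFinset_card, ← Nat.cast_mul,
      Nat.cast_le]
    apply Finset.card_le_mul_card_image_of_maps_to (f := g)
    · intro a ha
      rw [Set.Finite.mem_toFinset] at *
      exact hmaps a ha
    · intro b _
      have hsub2 : (hs.toFinset.filter (fun a => g a = b)) ⊆ (hfibfin b).toFinset := by
        intro a ha
        rw [Finset.mem_filter, Set.Finite.mem_toFinset] at ha
        rw [Set.Finite.mem_toFinset]
        exact ⟨ha.1, ha.2⟩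
      calc (hs.toFinset.filter (fun a => g a = b)).card ≤ (hfibfin b).toFinset.card :=
            Finset.card_le_card hsub2
        _ ≤ m := by
            have h := hfib b
            rwa [(hfibfin b).encard_eq_coe_toFinset_card, Nat.cast_le] at h
  · rw [Set.Infinite.encard_eq ht, ENat.mul_top]
    · exact le_top
    · exact_mod_cast Nat.one_le_iff_ne_zero.mp hm

lemma encard_lattice_box (R : ℝ) (F : Set (EuclideanSpace ℝ ι))
    (hint : ∀ w ∈ F, ∀ i, w i = ((⌊w i⌋ : ℤ) : ℝ))
    (hdist : ∀ w ∈ F, ∀ w' ∈ F, ∀ i, |w i - w' i| ≤ R) :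
    F.encard ≤ (((2 * ⌈R⌉ + 1).toNat ^ Fintype.card ι : ℕ) : ℕ∞) := by
  classical
  rcases F.eq_empty_or_nonempty with rfl | ⟨w₀, hw₀⟩
  · simp
  set Φ : EuclideanSpace ℝ ι → (ι → ℤ) := fun w i => ⌊w i⌋ with hΦ
  have hinj : Set.InjOn Φ F := by
    intro w hw w' hw' h
    apply PiLp.ext; intro i
    rw [hint w hw i, hint w' hw' i]
    exact_mod_cast congrFun h i
  have himg : Φ '' F ⊆ ↑(Finset.Icc (fun i => Φ w₀ i - ⌈R⌉) (fun i => Φ w₀ i + ⌈R⌉)) := by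
    rintro _ ⟨w, hw, rfl⟩
    rw [Finset.coe_Icc, Set.mem_Icc]
    have key : ∀ i, |Φ w i - Φ w₀ i| ≤ ⌈R⌉ := by
      intro i
      have h1 : |((Φ w i - Φ w₀ i : ℤ) : ℝ)| ≤ (⌈R⌉ : ℝ) := by
        push_cast
        rw [← hint w hw i, ← hint w₀ hw₀ i]
        exact (hdist w hw w₀ hw₀ i).trans (Int.le_ceil R)
      exact_mod_cast h1
    refine ⟨fun i => ?_, fun i => ?_⟩ <;> (beta_reduce; obtain ⟨h1, h2⟩ := abs_le.mp (key i); omega)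
  calc F.encard = (Φ '' F).encard := (hinj.encard_image).symm
    _ ≤ (↑(Finset.Icc (fun i => Φ w₀ i - ⌈R⌉) (fun i => Φ w₀ i + ⌈R⌉) :
          Finset (ι → ℤ)) : Set (ι → ℤ)).encard := Set.encard_mono himg
    _ = ((Finset.Icc (fun i => Φ w₀ i - ⌈R⌉) (fun i => Φ w₀ i + ⌈R⌉) :
          Finset (ι → ℤ)).card : ℕ∞) := Set.encard_coe_eq_coe_finsetCard _
    _ ≤ _ := by
        rw [Nat.cast_le, Pi.card_Icc]
        refine le_trans (Finset.prod_le_pow_card _ _ ((2 * ⌈R⌉ + 1).toNat) ?_)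
          (le_of_eq (by rw [Finset.card_univ]))
        intro i _
        rw [Int.card_Icc]
        omega

lemma count_le_of_sigma {ι κ : Type*} [Fintype ι] [Fintype κ]
    (S : Set (EuclideanSpace ℝ κ)) (T : Set (EuclideanSpace ℝ ι))
    (σ : EuclideanSpace ℝ κ → EuclideanSpace ℝ ι) (C R : ℝ) (hR : 0 ≤ R)
    (h1 : ∀ w ∈ floorSet S, σ w ∈ floorSet T)
    (h2 : ∀ ℓ : ℝ, 1 ≤ ℓ → ∀ w ∈ floorSet S ∩ centeredCube ℓ, σ w ∈ centeredCube (C * ℓ))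
    (h3 : ∀ w ∈ floorSet S, ∀ w' ∈ floorSet S, σ w = σ w' → ∀ i, |w i - w' i| ≤ R)
    (ℓ : ℝ) (hℓ : 1 ≤ ℓ) :
    (floorSet S ∩ centeredCube ℓ).encard ≤
      (((2 * ⌈R⌉ + 1).toNat ^ Fintype.card κ : ℕ) : ℕ∞) *
        (floorSet T ∩ centeredCube (C * ℓ)).encard := by
  have hceil : 0 ≤ ⌈R⌉ := Int.ceil_nonneg hR
  apply encard_le_mul_of_fibers σ
  · exact Nat.one_le_pow _ _ (by omega)
  · intro w hw
    exact ⟨h1 w hw.1, h2 ℓ hℓ w hw⟩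
  · intro b
    refine le_trans (encard_lattice_box R _ ?_ ?_) le_rfl
    · intro w hw i
      exact floorSet_int hw.1.1 i
    · intro w hw w' hw' i
      exact h3 w hw.1.1 w' hw'.1.1 ((show σ w = b from hw.2).trans
        (show σ w' = b from hw'.2).symm) i

lemma massMeas_le_transfer {ι κ : Type*} [Fintype ι] [Fintype κ]
    (A : Set (EuclideanSpace ℝ ι)) (B : Set (EuclideanSpace ℝ κ))
    (c0 : ℕ) (hc0 : 1 ≤ c0) (C : ℝ) (hC : 1 ≤ C)
    (hcount : ∀ ℓ : ℝ, 1 ≤ ℓ →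
      (floorSet B ∩ centeredCube ℓ).encard ≤
        (c0 : ℕ∞) * (floorSet A ∩ centeredCube (C * ℓ)).encard)
    (β : ℝ) (hβ : 0 ≤ β) :
    massMeas β B ≤ ENNReal.ofReal (c0 * C ^ β) * massMeas β A := by
  have hC0 : (0 : ℝ) < C := lt_of_lt_of_le one_pos hC
  have hCb1 : (1 : ℝ) ≤ C ^ β := Real.one_le_rpow hC hβ
  have hconst_eq : ENNReal.ofReal (c0 * C ^ β) =
      (c0 : ℝ≥0∞) * ENNReal.ofReal (C ^ β) := by
    rw [ENNReal.ofReal_mul (Nat.cast_nonneg c0), ENNReal.ofReal_natCast]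
  have hoC0 : ENNReal.ofReal (C ^ β) ≠ 0 := by
    simp [ENNReal.ofReal_eq_zero, not_le, lt_of_lt_of_le one_pos hCb1]
  have hoCtop : ENNReal.ofReal (C ^ β) ≠ ⊤ := ENNReal.ofReal_ne_top
  have hconst0 : ENNReal.ofReal (c0 * C ^ β) ≠ 0 := by
    rw [Ne, ENNReal.ofReal_eq_zero, not_le]
    have : (1:ℝ) ≤ (c0:ℝ) := by exact_mod_cast hc0
    nlinarith
  conv_rhs => rw [massMeas]
  rw [ENNReal.mul_iInf_of_ne hconst0 ENNReal.ofReal_ne_top]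
  apply le_iInf
  intro L'
  have key : massMeas β B ≤
      ENNReal.ofReal (c0 * C ^ β) *
        ⨆ (ℓ : ℝ) (_ : L' ≤ ℓ ∧ 0 < ℓ),
          ((floorSet A ∩ centeredCube ℓ).encard : ℝ≥0∞) / ENNReal.ofReal ((2 * ℓ) ^ β) := by
    have step1 : massMeas β B ≤
        ⨆ (ℓ : ℝ) (_ : max 1 (L' / C) ≤ ℓ ∧ 0 < ℓ),
          ((floorSet B ∩ centeredCube ℓ).encard : ℝ≥0∞) / ENNReal.ofReal ((2 * ℓ) ^ β) :=
      iInf_le _ _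
    refine step1.trans ?_
    apply iSup_le; intro ℓ; apply iSup_le; rintro ⟨h1, h2⟩
    have hℓ1 : (1 : ℝ) ≤ ℓ := le_trans (le_max_left _ _) h1
    have hCl : L' ≤ C * ℓ := by
      have := le_trans (le_max_right _ _) h1
      rw [div_le_iff₀ hC0] at this
      linarith [this]
    have hCl0 : (0 : ℝ) < C * ℓ := by positivity
    have hcast : ((floorSet B ∩ centeredCube ℓ).encard : ℝ≥0∞) ≤
        (c0 : ℝ≥0∞) * ((floorSet A ∩ centeredCube (C * ℓ)).encard : ℝ≥0∞) := by
      have h := ENat.toENNReal_le.2 (hcount ℓ hℓ1)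
      rwa [ENat.toENNReal_mul, ENat.toENNReal_coe] at h
    have hpow : ENNReal.ofReal ((2 * (C * ℓ)) ^ β) =
        ENNReal.ofReal (C ^ β) * ENNReal.ofReal ((2 * ℓ) ^ β) := by
      rw [← ENNReal.ofReal_mul (Real.rpow_nonneg (le_of_lt hC0) β)]
      congr 1
      rw [show (2 * (C * ℓ)) = C * (2 * ℓ) by ring,
        Real.mul_rpow (le_of_lt hC0) (by linarith)]
    calc ((floorSet B ∩ centeredCube ℓ).encard : ℝ≥0∞) / ENNReal.ofReal ((2 * ℓ) ^ β)
        ≤ ((c0 : ℝ≥0∞) * ((floorSet A ∩ centeredCube (C * ℓ)).encard : ℝ≥0∞)) /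
            ENNReal.ofReal ((2 * ℓ) ^ β) := ENNReal.div_le_div_right hcast _
      _ = (c0 : ℝ≥0∞) * (((floorSet A ∩ centeredCube (C * ℓ)).encard : ℝ≥0∞) /
            ENNReal.ofReal ((2 * ℓ) ^ β)) := by rw [mul_div_assoc]
      _ = (c0 : ℝ≥0∞) * (ENNReal.ofReal (C ^ β) *
            (((floorSet A ∩ centeredCube (C * ℓ)).encard : ℝ≥0∞) /
              ENNReal.ofReal ((2 * (C * ℓ)) ^ β))) := by
          congr 1
          rw [hpow, ← mul_div_assoc,
            ENNReal.mul_div_mul_left _ _ hoC0 hoCtop]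
      _ ≤ ENNReal.ofReal (c0 * C ^ β) *
            ⨆ (ℓ' : ℝ) (_ : L' ≤ ℓ' ∧ 0 < ℓ'),
              ((floorSet A ∩ centeredCube ℓ').encard : ℝ≥0∞) /
                ENNReal.ofReal ((2 * ℓ') ^ β) := by
          rw [hconst_eq, mul_assoc]
          apply mul_le_mul_right
          apply mul_le_mul_right
          exact le_iSup₂_of_le (C * ℓ) ⟨hCl, hCl0⟩ le_rfl
  exact key

lemma massMeas_empty (γ : ℝ) : massMeas γ (∅ : Set (EuclideanSpace ℝ ι)) = 0 := by
  simp [massMeas, floorSet]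

set_option maxHeartbeats 1600000 in
/-- Invariance of the mass measures (up to a multiplicative constant depending only on `α`
and `f`), of `α`-mass regularity, and of the mass dimension under a quasi-isometric
embedding `f : X → ℝ^d`, `X ⊆ ℝ^k`. -/
theorem stmt_10 (k d : ℕ) (K M : ℝ) (hK : 1 ≤ K) (hM : 0 ≤ M)
    (X : Set (EuclideanSpace ℝ (Fin k)))
    (f : EuclideanSpace ℝ (Fin k) → EuclideanSpace ℝ (Fin d))
    (hf : QIEOn K M X f) (α : ℝ) (hα : 0 ≤ α) :
    ∃ c : ℝ, 1 ≤ c ∧ ∀ A ⊆ X,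
      massMeas α A ≤ ENNReal.ofReal c * massMeas α (f '' A) ∧
      massMeas α (f '' A) ≤ ENNReal.ofReal c * massMeas α A ∧
      ((0 < massMeas α A ∧ massMeas α A < ⊤) ↔
        (0 < massMeas α (f '' A) ∧ massMeas α (f '' A) < ⊤)) ∧
      mdim A = mdim (f '' A) := by
  classical
  rcases X.eq_empty_or_nonempty with rfl | ⟨p, hp⟩
  · refine ⟨1, le_refl 1, fun A hA => ?_⟩
    rw [Set.subset_empty_iff] at hA; subst hA
    rw [Set.image_empty]
    refine ⟨by simp [massMeas_empty], by simp [massMeas_empty], by simp [massMeas_empty], ?_⟩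
    unfold mdim
    congr 1
    ext β
    simp [massMeas_empty]
  have hK0 : (0:ℝ) < K := lt_of_lt_of_le one_pos hK
  set sk : ℝ := Real.sqrt (Fintype.card (Fin k)) with hsk
  set sd : ℝ := Real.sqrt (Fintype.card (Fin d)) with hsd
  have hsk0 : 0 ≤ sk := Real.sqrt_nonneg _
  have hsd0 : 0 ≤ sd := Real.sqrt_nonneg _
  set np : ℝ := ‖p‖ with hnp
  set nq : ℝ := ‖f p‖ with hnq
  have hnp0 : 0 ≤ np := norm_nonneg _
  have hnq0 : 0 ≤ nq := norm_nonneg _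
  -- QIE consequences on `X`
  have hup : ∀ x ∈ X, ∀ y ∈ X, dist (f x) (f y) ≤ K * dist x y + M :=
    fun x hx y hy => (hf x hx y hy).2
  have hlow : ∀ x ∈ X, ∀ y ∈ X, dist x y ≤ K * (dist (f x) (f y) + M) := by
    intro x hx y hy
    have h := (hf x hx y hy).1
    have h' : (1 / K) * dist x y ≤ dist (f x) (f y) + M := by linarith
    calc dist x y = K * ((1 / K) * dist x y) := by field_simp
      _ ≤ K * (dist (f x) (f y) + M) := mul_le_mul_of_nonneg_left h' hK0.le
  -- constants
  set C1 : ℝ := K * sd * (2 + nq) + np + K * M + 1 with hC1def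
  set C2 : ℝ := K * sk * (2 + np) + nq + M + 1 with hC2def
  set C : ℝ := max C1 C2 with hCdef
  have hC11 : 1 ≤ C1 := by
    rw [hC1def]
    nlinarith [mul_nonneg (mul_nonneg hK0.le hsd0) (show (0:ℝ) ≤ 2 + nq by linarith),
      mul_nonneg hK0.le hM]
  have hC21 : 1 ≤ C2 := by
    rw [hC2def]
    nlinarith [mul_nonneg (mul_nonneg hK0.le hsk0) (show (0:ℝ) ≤ 2 + np by linarith)]
  have hC : 1 ≤ C := le_trans hC11 (le_max_left _ _)
  have hC0 : (0:ℝ) < C := lt_of_lt_of_le one_pos hC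
  set R1 : ℝ := K * sk + M + 2 with hR1def
  set R2 : ℝ := K * (sd + M) + 2 with hR2def
  have hR1 : 0 ≤ R1 := by
    rw [hR1def]; nlinarith [mul_nonneg hK0.le hsk0]
  have hR2 : 0 ≤ R2 := by
    rw [hR2def]; nlinarith [mul_nonneg hK0.le (show (0:ℝ) ≤ sd + M by linarith)]
  set m1 : ℕ := (2 * ⌈R1⌉ + 1).toNat ^ Fintype.card (Fin d) with hm1def
  set m2 : ℕ := (2 * ⌈R2⌉ + 1).toNat ^ Fintype.card (Fin k) with hm2def
  set c0 : ℕ := max m1 m2 with hc0def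
  have hc0 : 1 ≤ c0 := by
    refine le_trans ?_ (le_max_left m1 m2)
    have := Int.ceil_nonneg hR1
    exact Nat.one_le_pow _ _ (by omega)
  refine ⟨(c0:ℝ) * C ^ α, ?_, fun A hA => ?_⟩
  · have h1 : (1:ℝ) ≤ (c0:ℝ) := by exact_mod_cast hc0
    have h2 : (1:ℝ) ≤ C ^ α := Real.one_le_rpow hC hα
    nlinarith
  -- direction 1 : count of `f '' A` bounded by count of `A`
  have picks1 : ∀ w, w ∈ floorSet (f '' A) → ∃ x, x ∈ A ∧ floorPt (f x) = w := by
    rintro w ⟨y, ⟨x, hx, rfl⟩, rfl⟩; exact ⟨x, hx, rfl⟩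
  have picks2 : ∀ z, z ∈ floorSet A → ∃ x, x ∈ A ∧ floorPt x = z := by
    rintro z ⟨x, hx, rfl⟩; exact ⟨x, hx, rfl⟩
  choose pick1 hpick1A hpick1f using picks1
  choose pick2 hpick2A hpick2f using picks2
  set σ1 : EuclideanSpace ℝ (Fin d) → EuclideanSpace ℝ (Fin k) :=
    fun w => if h : w ∈ floorSet (f '' A) then floorPt (pick1 w h) else p with hσ1
  set σ2 : EuclideanSpace ℝ (Fin k) → EuclideanSpace ℝ (Fin d) :=
    fun z => if h : z ∈ floorSet A then floorPt (f (pick2 z h)) else f p with hσ2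
  -- coordinate bounds of points over a floor point in a centered cube
  have hcoord1 : ∀ (ℓ : ℝ) (w : EuclideanSpace ℝ (Fin d)) (hw1 : w ∈ floorSet (f '' A)),
      w ∈ centeredCube ℓ → ∀ i, |f (pick1 w hw1) i| ≤ ℓ + 1 := by
    intro ℓ w hw1 hw2 i
    have hcc := mem_centeredCube.mp hw2 i
    have hwi : w i = ((⌊f (pick1 w hw1) i⌋ : ℤ) : ℝ) :=
      (congrArg (fun v => v i) (hpick1f w hw1)).symm
    have h2 := Int.floor_le (f (pick1 w hw1) i)
    have h4 := Int.lt_floor_add_one (f (pick1 w hw1) i)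
    rw [hwi] at hcc
    rw [abs_le]
    exact ⟨by linarith [hcc.1], by linarith [hcc.2]⟩
  have hcoord2 : ∀ (ℓ : ℝ) (z : EuclideanSpace ℝ (Fin k)) (hz1 : z ∈ floorSet A),
      z ∈ centeredCube ℓ → ∀ i, |pick2 z hz1 i| ≤ ℓ + 1 := by
    intro ℓ z hz1 hz2 i
    have hcc := mem_centeredCube.mp hz2 i
    have hzi : z i = ((⌊pick2 z hz1 i⌋ : ℤ) : ℝ) :=
      (congrArg (fun v => v i) (hpick2f z hz1)).symm
    have h2 := Int.floor_le (pick2 z hz1 i)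
    have h4 := Int.lt_floor_add_one (pick2 z hz1 i)
    rw [hzi] at hcc
    rw [abs_le]
    exact ⟨by linarith [hcc.1], by linarith [hcc.2]⟩
  -- the two counting estimates
  have count1 : ∀ ℓ : ℝ, 1 ≤ ℓ →
      (floorSet (f '' A) ∩ centeredCube ℓ).encard ≤
        (c0 : ℕ∞) * (floorSet A ∩ centeredCube (C * ℓ)).encard := by
    intro ℓ hℓ
    refine le_trans (count_le_of_sigma (f '' A) A σ1 C R1 hR1 ?_ ?_ ?_ ℓ hℓ)
      (mul_le_mul_left (by exact_mod_cast Nat.cast_le.2 (le_max_left m1 m2)) _)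
    · intro w hw
      rw [hσ1]; beta_reduce; rw [dif_pos hw]
      exact ⟨pick1 w hw, hpick1A w hw, rfl⟩
    · intro ℓ' hℓ' w hw
      have hw1 := hw.1
      have hℓ'0 : (0:ℝ) < ℓ' := lt_of_lt_of_le one_pos hℓ'
      set x := pick1 w hw1 with hx
      have hxA : x ∈ A := hpick1A w hw1
      have hfc : ∀ i, |f x i| ≤ ℓ' + 1 := hcoord1 ℓ' w hw1 hw.2
      have hdfp : dist (f x) (f p) ≤ sd * (ℓ' + 1 + nq) := by
        apply dist_le_of_coords _ _ _ (by linarith)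
        intro i
        have := abs_sub (f x i) (f p i)
        have h1 := hfc i
        have h2 := abs_coord_le_norm (f p) i
        calc |f x i - f p i| ≤ |f x i| + |f p i| := abs_sub _ _
          _ ≤ (ℓ' + 1) + nq := by rw [hnq]; exact add_le_add h1 h2
      have hdxp : dist x p ≤ K * (sd * (ℓ' + 1 + nq) + M) := by
        refine le_trans (hlow x (hA hxA) p hp) ?_
        exact mul_le_mul_of_nonneg_left (add_le_add_left hdfp M) hK0.le
      have hxc : ∀ j, |x j| ≤ (C1 - 1) * ℓ' := by
        intro j
        have h1 : |x j| ≤ |x j - p j| + |p j| := by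
          calc |x j| = |(x j - p j) + p j| := by ring_nf
            _ ≤ |x j - p j| + |p j| := abs_add_le _ _
        have h2 := abs_coord_le_dist x p j
        have h3 := abs_coord_le_norm p j
        have hC1e : (C1 - 1) = K * sd * (2 + nq) + np + K * M := by rw [hC1def]; ring
        rw [hC1e]
        have hbig : K * sd * (ℓ' + 1 + nq) ≤ K * sd * (2 + nq) * ℓ' := by
          have hin : ℓ' + 1 + nq ≤ (2 + nq) * ℓ' := by
            nlinarith [mul_nonneg hnq0 (sub_nonneg.2 hℓ')]
          nlinarith [mul_le_mul_of_nonneg_left hin (mul_nonneg hK0.le hsd0)]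
        have : |x j| ≤ np + K * (sd * (ℓ' + 1 + nq) + M) := by
          rw [hnp]
          calc |x j| ≤ |x j - p j| + |p j| := h1
            _ ≤ dist x p + ‖p‖ := add_le_add h2 h3
            _ ≤ K * (sd * (ℓ' + 1 + nq) + M) + ‖p‖ := add_le_add_left hdxp _
            _ = ‖p‖ + K * (sd * (ℓ' + 1 + nq) + M) := by ring
        nlinarith [this, hbig,
          mul_nonneg (add_nonneg hnp0 (mul_nonneg hK0.le hM)) (sub_nonneg.2 hℓ')]
      rw [hσ1]; beta_reduce; rw [dif_pos hw1]
      rw [mem_centeredCube]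
      intro j
      have hxj := hxc j
      rw [abs_le] at hxj
      have hfl1 := Int.floor_le (x j)
      have hfl2 := Int.sub_one_lt_floor (x j)
      have hCC : C1 * ℓ' ≤ C * ℓ' :=
        mul_le_mul_of_nonneg_right (le_max_left _ _) hℓ'0.le
      constructor
      · show -(C * ℓ') ≤ ((⌊x j⌋ : ℤ) : ℝ)
        linarith [hxj.1, hCC, hℓ', hfl2]
      · show ((⌊x j⌋ : ℤ) : ℝ) < C * ℓ'
        linarith [hxj.2, hCC, hℓ', hfl1, hℓ'0]
    · intro w hw w' hw' heq i
      rw [hσ1] at heq; beta_reduce at heq; rw [dif_pos hw, dif_pos hw'] at heq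
      set x := pick1 w hw with hxd
      set x' := pick1 w' hw' with hxd'
      have hxA : x ∈ A := hpick1A w hw
      have hxA' : x' ∈ A := hpick1A w' hw'
      have hdxx : dist x x' ≤ sk * 1 := by
        apply dist_le_of_coords _ _ _ one_pos.le
        exact abs_sub_le_one_of_floorPt_eq heq
      have hfd : dist (f x) (f x') ≤ K * sk + M := by
        have := hup x (hA hxA) x' (hA hxA')
        linarith [mul_le_mul_of_nonneg_left hdxx hK0.le]
      have t1 := abs_sub_le (w i) (f x i) (w' i)
      have t2 := abs_sub_le (f x i) (f x' i) (w' i)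
      have t3 : |f x i - f x' i| ≤ dist (f x) (f x') := abs_coord_le_dist (f x) (f x') i
      have t4 : |w i - f x i| ≤ 1 := by
        have h := abs_floorPt_sub_le_one (f x) i
        rw [hpick1f w hw] at h
        exact h
      have t5 : |f x' i - w' i| ≤ 1 := by
        have h := abs_floorPt_sub_le_one (f x') i
        rw [hpick1f w' hw'] at h
        rw [abs_sub_comm]
        exact h
      rw [hR1def]
      linarith
  have count2 : ∀ ℓ : ℝ, 1 ≤ ℓ →
      (floorSet A ∩ centeredCube ℓ).encard ≤
        (c0 : ℕ∞) * (floorSet (f '' A) ∩ centeredCube (C * ℓ)).encard := by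
    intro ℓ hℓ
    refine le_trans (count_le_of_sigma A (f '' A) σ2 C R2 hR2 ?_ ?_ ?_ ℓ hℓ)
      (mul_le_mul_left (by exact_mod_cast Nat.cast_le.2 (le_max_right m1 m2)) _)
    · intro z hz
      rw [hσ2]; beta_reduce; rw [dif_pos hz]
      exact ⟨f (pick2 z hz), ⟨pick2 z hz, hpick2A z hz, rfl⟩, rfl⟩
    · intro ℓ' hℓ' z hz
      have hz1 := hz.1
      have hℓ'0 : (0:ℝ) < ℓ' := lt_of_lt_of_le one_pos hℓ'
      set x := pick2 z hz1 with hx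
      have hxA : x ∈ A := hpick2A z hz1
      have hxcc : ∀ i, |x i| ≤ ℓ' + 1 := hcoord2 ℓ' z hz1 hz.2
      have hdxp : dist x p ≤ sk * (ℓ' + 1 + np) := by
        apply dist_le_of_coords _ _ _ (by linarith)
        intro i
        have h1 := hxcc i
        have h2 := abs_coord_le_norm p i
        calc |x i - p i| ≤ |x i| + |p i| := abs_sub _ _
          _ ≤ (ℓ' + 1) + np := by rw [hnp]; exact add_le_add h1 h2
      have hdfp : dist (f x) (f p) ≤ K * (sk * (ℓ' + 1 + np)) + M := by
        have := hup x (hA hxA) p hp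
        linarith [mul_le_mul_of_nonneg_left hdxp hK0.le]
      have hfc : ∀ j, |f x j| ≤ (C2 - 1) * ℓ' := by
        intro j
        have h1 : |f x j| ≤ |f x j - f p j| + |f p j| := by
          calc |f x j| = |(f x j - f p j) + f p j| := by ring_nf
            _ ≤ |f x j - f p j| + |f p j| := abs_add_le _ _
        have h2 := abs_coord_le_dist (f x) (f p) j
        have h3 := abs_coord_le_norm (f p) j
        have hC2e : (C2 - 1) = K * sk * (2 + np) + nq + M := by rw [hC2def]; ring
        rw [hC2e]
        have hbig : K * (sk * (ℓ' + 1 + np)) ≤ K * sk * (2 + np) * ℓ' := by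
          have hin : ℓ' + 1 + np ≤ (2 + np) * ℓ' := by
            nlinarith [mul_nonneg hnp0 (sub_nonneg.2 hℓ')]
          nlinarith [mul_le_mul_of_nonneg_left hin (mul_nonneg hK0.le hsk0)]
        have : |f x j| ≤ nq + K * (sk * (ℓ' + 1 + np)) + M := by
          rw [hnq]
          calc |f x j| ≤ |f x j - f p j| + |f p j| := h1
            _ ≤ dist (f x) (f p) + ‖f p‖ := add_le_add h2 h3
            _ ≤ (K * (sk * (ℓ' + 1 + np)) + M) + ‖f p‖ := add_le_add_left hdfp _
            _ = ‖f p‖ + K * (sk * (ℓ' + 1 + np)) + M := by ring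
        nlinarith [this, hbig,
          mul_nonneg (add_nonneg hnq0 hM) (sub_nonneg.2 hℓ')]
      rw [hσ2]; beta_reduce; rw [dif_pos hz1]
      rw [mem_centeredCube]
      intro j
      have hxj := hfc j
      rw [abs_le] at hxj
      have hfl1 := Int.floor_le (f x j)
      have hfl2 := Int.sub_one_lt_floor (f x j)
      have hCC : C2 * ℓ' ≤ C * ℓ' :=
        mul_le_mul_of_nonneg_right (le_max_right _ _) hℓ'0.le
      constructor
      · show -(C * ℓ') ≤ ((⌊f x j⌋ : ℤ) : ℝ)
        linarith [hxj.1, hCC, hℓ', hfl2]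
      · show ((⌊f x j⌋ : ℤ) : ℝ) < C * ℓ'
        linarith [hxj.2, hCC, hℓ', hfl1, hℓ'0]
    · intro z hz z' hz' heq i
      rw [hσ2] at heq; beta_reduce at heq; rw [dif_pos hz, dif_pos hz'] at heq
      set x := pick2 z hz with hxd
      set x' := pick2 z' hz' with hxd'
      have hxA : x ∈ A := hpick2A z hz
      have hxA' : x' ∈ A := hpick2A z' hz'
      have hdff : dist (f x) (f x') ≤ sd * 1 := by
        apply dist_le_of_coords _ _ _ one_pos.le
        exact abs_sub_le_one_of_floorPt_eq heq
      have hdxx : dist x x' ≤ K * (sd + M) := by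
        refine le_trans (hlow x (hA hxA) x' (hA hxA')) ?_
        have h6 : dist (f x) (f x') + M ≤ sd + M := by linarith
        exact mul_le_mul_of_nonneg_left h6 hK0.le
      have t1 := abs_sub_le (z i) (x i) (z' i)
      have t2 := abs_sub_le (x i) (x' i) (z' i)
      have t3 : |x i - x' i| ≤ dist x x' := abs_coord_le_dist x x' i
      have t4 : |z i - x i| ≤ 1 := by
        have h := abs_floorPt_sub_le_one x i
        rw [hpick2f z hz] at h
        exact h
      have t5 : |x' i - z' i| ≤ 1 := by
        have h := abs_floorPt_sub_le_one x' i
        rw [hpick2f z' hz'] at h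
        rw [abs_sub_comm]
        exact h
      rw [hR2def]
      linarith
  -- transfer to the mass measures
  have h_ba : ∀ β : ℝ, 0 ≤ β →
      massMeas β (f '' A) ≤ ENNReal.ofReal ((c0:ℝ) * C ^ β) * massMeas β A :=
    fun β hβ => massMeas_le_transfer A (f '' A) c0 hc0 C hC count1 β hβ
  have h_ab : ∀ β : ℝ, 0 ≤ β →
      massMeas β A ≤ ENNReal.ofReal ((c0:ℝ) * C ^ β) * massMeas β (f '' A) :=
    fun β hβ => massMeas_le_transfer (f '' A) A c0 hc0 C hC count2 β hβ
  refine ⟨h_ab α hα, h_ba α hα, ?_, ?_⟩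
  · constructor
    · rintro ⟨hpos, hlt⟩
      constructor
      · refine pos_iff_ne_zero.mpr (fun h0 => ?_)
        have h := h_ab α hα
        rw [h0, mul_zero] at h
        exact absurd (le_antisymm h (zero_le)) (ne_of_gt hpos)
      · exact lt_of_le_of_lt (h_ba α hα)
          (ENNReal.mul_lt_top ENNReal.ofReal_lt_top hlt)
    · rintro ⟨hpos, hlt⟩
      constructor
      · refine pos_iff_ne_zero.mpr (fun h0 => ?_)
        have h := h_ba α hα
        rw [h0, mul_zero] at h
        exact absurd (le_antisymm h (zero_le)) (ne_of_gt hpos)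
      · exact lt_of_le_of_lt (h_ab α hα)
          (ENNReal.mul_lt_top ENNReal.ofReal_lt_top hlt)
  · unfold mdim
    congr 1
    ext β
    simp only [Set.mem_setOf_eq]
    constructor
    · rintro ⟨hβ, h0⟩
      refine ⟨hβ, le_antisymm ?_ (zero_le)⟩
      have h := h_ba β hβ
      rwa [h0, mul_zero] at h
    · rintro ⟨hβ, h0⟩
      refine ⟨hβ, le_antisymm ?_ (zero_le)⟩
      have h := h_ab β hβ
      rwa [h0, mul_zero] at h

end
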